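/- Let H be a k-uniform hypergraph on n vertices with signless Laplacian Q and Zagreb index Z(H) = Σ_v d(v)^2. Then ρ(Q) ≥ k√(Z(H)/n), with equality if and only if H is regular (assuming H connected). -/

import Mathlib

open Matrix BigOperators Finset

/-- Incidence matrix of a hypergraph on vertex set `Fin n` with edges `E : Fin m → Finset (Fin n)`. -/
noncomputable def inc {n m : ℕ} (E : Fin m → Finset (Fin n)) : Matrix (Fin n) (Fin m) ℝ :=
  fun v e => if v ∈ E e then 1 else 0

/-- Adjacency matrix of the line multigraph: `(e,f)`-entry is `|E e ∩ E f|` for `e ≠ f`, `0` on diagonal. -/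
noncomputable def lineAdj {n m : ℕ} (E : Fin m → Finset (Fin n)) : Matrix (Fin m) (Fin m) ℝ :=
  fun e f => if e = f then 0 else ((E e ∩ E f).card : ℝ)

/-- Adjacency matrix of the clique multigraph: `(u,v)`-entry is the number of edges containing both. -/
noncomputable def cliqueAdj {n m : ℕ} (E : Fin m → Finset (Fin n)) : Matrix (Fin n) (Fin n) ℝ :=
  fun u v => if u = v then 0 else ((univ.filter fun e => u ∈ E e ∧ v ∈ E e).card : ℝ)

/-- Degree of a vertex: number of edges containing it. -/
def deg {n m : ℕ} (E : Fin m → Finset (Fin n)) (v : Fin n) : ℕ :=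
  (univ.filter fun e => v ∈ E e).card

lemma Q_apply {n m : ℕ} (E : Fin m → Finset (Fin n)) (u v : Fin n) :
    (inc E * (inc E)ᵀ) u v
      = ∑ e, (if u ∈ E e then (1:ℝ) else 0) * (if v ∈ E e then 1 else 0) := by
  simp [Matrix.mul_apply, inc]

lemma Q_nonneg {n m : ℕ} (E : Fin m → Finset (Fin n)) (u v : Fin n) :
    0 ≤ (inc E * (inc E)ᵀ) u v := by
  rw [Q_apply]
  exact Finset.sum_nonneg fun e _ => by positivity

lemma Q_rowsum {n m k : ℕ} (E : Fin m → Finset (Fin n)) (hk : ∀ e, (E e).card = k)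
    (u : Fin n) : ∑ v, (inc E * (inc E)ᵀ) u v = (k : ℝ) * deg E u := by
  simp only [Q_apply]
  rw [Finset.sum_comm]
  have : ∀ e : Fin m, ∑ v, (if u ∈ E e then (1:ℝ) else 0) * (if v ∈ E e then 1 else 0)
      = (if u ∈ E e then (1:ℝ) else 0) * k := by
    intro e
    rw [← Finset.mul_sum]
    congr 1
    rw [Finset.sum_boole]
    simp [Finset.filter_mem_eq_inter, hk e]
  simp only [this]
  rw [← Finset.sum_mul, Finset.sum_boole, mul_comm]
  simp [deg]

lemma horth {n : ℕ} {A : Matrix (Fin n) (Fin n) ℝ} (hA : A.IsHermitian) (i j : Fin n) :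
    ∑ u, hA.eigenvectorBasis i u * hA.eigenvectorBasis j u = if i = j then 1 else 0 := by
  have h := hA.eigenvectorBasis.orthonormal
  rw [orthonormal_iff_ite] at h
  simpa [PiLp.inner_apply, mul_comm] using h i j

lemma pairing {n : ℕ} {A : Matrix (Fin n) (Fin n) ℝ} (hA : A.IsHermitian) (a a' : Fin n → ℝ) :
    ∑ u, (∑ i, a i * hA.eigenvectorBasis i u) * (∑ j, a' j * hA.eigenvectorBasis j u)
      = ∑ i, a i * a' i := by
  set B : Fin n → Fin n → ℝ := fun i u => hA.eigenvectorBasis i u with hB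
  calc ∑ u, (∑ i, a i * B i u) * (∑ j, a' j * B j u)
      = ∑ u, ∑ i, ∑ j, (a i * a' j) * (B i u * B j u) := by
        refine Finset.sum_congr rfl fun u _ => ?_
        rw [Finset.sum_mul_sum]
        exact Finset.sum_congr rfl fun i _ => Finset.sum_congr rfl fun j _ => by ring
    _ = ∑ i, ∑ j, (a i * a' j) * ∑ u, B i u * B j u := by
        rw [Finset.sum_comm]
        refine Finset.sum_congr rfl fun i _ => ?_
        rw [Finset.sum_comm]
        exact Finset.sum_congr rfl fun j _ => (Finset.mul_sum _ _ _).symm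
    _ = ∑ i, a i * a' i := by
        refine Finset.sum_congr rfl fun i _ => ?_
        simp only [hB, horth hA, mul_ite, mul_one, mul_zero]
        simp

/-- Extraction of coordinates. -/
lemma coord {n : ℕ} {A : Matrix (Fin n) (Fin n) ℝ} (hA : A.IsHermitian) (a : Fin n → ℝ)
    (j : Fin n) :
    ∑ u, (∑ i, a i * hA.eigenvectorBasis i u) * hA.eigenvectorBasis j u = a j := by
  calc ∑ u, (∑ i, a i * hA.eigenvectorBasis i u) * hA.eigenvectorBasis j u
      = ∑ u, ∑ i, a i * (hA.eigenvectorBasis i u * hA.eigenvectorBasis j u) := by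
        refine Finset.sum_congr rfl fun u _ => ?_
        rw [Finset.sum_mul]
        exact Finset.sum_congr rfl fun i _ => by ring
    _ = ∑ i, a i * ∑ u, hA.eigenvectorBasis i u * hA.eigenvectorBasis j u := by
        rw [Finset.sum_comm]
        exact Finset.sum_congr rfl fun i _ => (Finset.mul_sum _ _ _).symm
    _ = a j := by
        simp only [horth hA, mul_ite, mul_one, mul_zero]
        simp

/-- for a connected `k`-graph, `ρ(Q) ≥ k√(Z(H)/n)` with equality iff
`H` is regular. -/
theorem stmt10 {n m k : ℕ} (E : Fin m → Finset (Fin n))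
    (hk2 : 2 ≤ k) (hk : ∀ e, (E e).card = k) (hn : 0 < n)
    (hconn : ∀ u v : Fin n,
      Relation.ReflTransGen (fun a b => ∃ e, a ∈ E e ∧ b ∈ E e) u v)
    (hQ : (inc E * (inc E)ᵀ).IsHermitian)
    (ρ : ℝ) (hρ : IsGreatest (Set.range hQ.eigenvalues) ρ)
    (Z : ℝ) (hZ : Z = ∑ v, (deg E v : ℝ) ^ 2) :
    (k : ℝ) * Real.sqrt (Z / n) ≤ ρ ∧
    (ρ = (k : ℝ) * Real.sqrt (Z / n) ↔ ∀ u v : Fin n, deg E u = deg E v) := by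
  set Q : Matrix (Fin n) (Fin n) ℝ := inc E * (inc E)ᵀ with hQdef
  set B : Fin n → Fin n → ℝ := fun i u => hQ.eigenvectorBasis i u with hBdef
  set lam : Fin n → ℝ := hQ.eigenvalues with hlamdef
  set x : EuclideanSpace ℝ (Fin n) := WithLp.toLp 2 (fun _ => (1:ℝ)) with hxdef
  set c : Fin n → ℝ := fun i => hQ.eigenvectorBasis.repr x i with hcdef
  -- x in coordinates
  have fact1 : ∀ u, ∑ i, c i * B i u = 1 := by
    intro u
    have h := hQ.eigenvectorBasis.sum_repr x
    have h2 : (∑ i, c i • hQ.eigenvectorBasis i) u = x u := by rw [h]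
    rw [WithLp.ofLp_sum, Finset.sum_apply] at h2
    simpa [hBdef] using h2
  -- the eigen-equation in coordinates
  have hQb : ∀ i u, ∑ v, Q u v * B i v = lam i * B i u := by
    intro i u
    have h := congrFun (hQ.mulVec_eigenvectorBasis i) u
    simpa [Matrix.mulVec, dotProduct, hBdef, hlamdef] using h
  -- key row-sum identity
  have key : ∀ u, (k:ℝ) * deg E u = ∑ i, (lam i * c i) * B i u := by
    intro u
    rw [← Q_rowsum E hk u]
    calc ∑ v, Q u v = ∑ v, Q u v * ∑ i, c i * B i v := by
          refine Finset.sum_congr rfl fun v _ => ?_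
          rw [fact1 v, mul_one]
      _ = ∑ i, c i * ∑ v, Q u v * B i v := by
          simp only [Finset.mul_sum]
          rw [Finset.sum_comm]
          refine Finset.sum_congr rfl fun i _ => ?_
          exact Finset.sum_congr rfl fun v _ => by ring
      _ = ∑ i, c i * (lam i * B i u) := by simp only [hQb]
      _ = ∑ i, (lam i * c i) * B i u := Finset.sum_congr rfl fun i _ => by ring
  -- Parseval identities
  have hn' : (n:ℝ) = ∑ i, c i * c i := by
    have h := pairing hQ c c
    simp only [hBdef] at h ⊢
    rw [← h]
    simp only [hBdef] at fact1; simp [fact1]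
  have hZ' : (k:ℝ)^2 * Z = ∑ i, (lam i * c i) * (lam i * c i) := by
    have h := pairing hQ (fun i => lam i * c i) (fun i => lam i * c i)
    simp only [hBdef] at h
    rw [← h]
    have : ∀ u : Fin n, (∑ i, (lam i * c i) * B i u) = (k:ℝ) * deg E u :=
      fun u => (key u).symm
    simp only [hBdef] at this
    simp only [this, hZ, Finset.mul_sum]
    exact Finset.sum_congr rfl fun u _ => by ring
  -- nonnegativity of eigenvalues
  have hpsd : Q.PosSemidef := by
    have h := Matrix.posSemidef_self_mul_conjTranspose (inc E)
    have hT : (inc E)ᴴ = (inc E)ᵀ := by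
      ext u v; simp [Matrix.conjTranspose_apply]
    rwa [hT] at h
  have hlam0 : ∀ i, 0 ≤ lam i := fun i => hpsd.eigenvalues_nonneg i
  have hρ0 : 0 ≤ ρ := by
    obtain ⟨i, hi⟩ := hρ.1
    exact hi ▸ hlam0 i
  have hlamρ : ∀ i, lam i ≤ ρ := fun i => hρ.2 ⟨i, rfl⟩
  have hZ0 : 0 ≤ Z := by
    rw [hZ]; exact Finset.sum_nonneg fun v _ => by positivity
  have hn0 : (0:ℝ) < n := by exact_mod_cast hn
  -- main inequality
  have hmain : (k:ℝ)^2 * Z ≤ ρ^2 * n := by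
    rw [hZ', hn', Finset.mul_sum]
    refine Finset.sum_le_sum fun i _ => ?_
    nlinarith [mul_nonneg (mul_nonneg (sub_nonneg.2 (hlamρ i)) (add_nonneg hρ0 (hlam0 i)))
      (mul_self_nonneg (c i))]
  have hineq : (k:ℝ) * Real.sqrt (Z / n) ≤ ρ := by
    have h1 : (k:ℝ)^2 * (Z / n) ≤ ρ^2 := by
      rw [← mul_div_assoc, div_le_iff₀ hn0]
      linarith
    have h2 := Real.sqrt_le_sqrt h1
    rw [Real.sqrt_sq hρ0] at h2
    calc (k:ℝ) * Real.sqrt (Z/n) = Real.sqrt ((k:ℝ)^2 * (Z/n)) := by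
          rw [Real.sqrt_mul (by positivity) (Z/n), Real.sqrt_sq (by positivity)]
      _ ≤ ρ := h2
  refine ⟨hineq, ?_, ?_⟩
  · -- equality implies regular
    intro heq u v
    have hsq : ρ^2 * n = (k:ℝ)^2 * Z := by
      have hZn : (0:ℝ) ≤ Z / n := by positivity
      have h3 : ρ^2 = (k:ℝ)^2 * (Z/n) := by
        rw [heq, mul_pow, Real.sq_sqrt hZn]
      rw [h3]
      field_simp
    have hzero : ∀ i ∈ univ, ρ^2 * (c i * c i) - (lam i * c i) * (lam i * c i) = 0 := by
      have hsum : ∑ i, (ρ^2 * (c i * c i) - (lam i * c i) * (lam i * c i)) = 0 := by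
        rw [Finset.sum_sub_distrib, ← Finset.mul_sum, ← hn', ← hZ', hsq, sub_self]
      refine (Finset.sum_eq_zero_iff_of_nonneg fun i _ => ?_).1 hsum
      nlinarith [mul_nonneg (mul_nonneg (sub_nonneg.2 (hlamρ i)) (add_nonneg hρ0 (hlam0 i)))
        (mul_self_nonneg (c i))]
    have heig : ∀ i, lam i * c i = ρ * c i := by
      intro i
      rcases eq_or_ne (c i) 0 with h0 | h0
      · rw [h0, mul_zero, mul_zero]
      · have h := hzero i (mem_univ i)
        have hc2 : c i * c i ≠ 0 := mul_ne_zero h0 h0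
        have hll : (ρ * ρ - lam i * lam i) * (c i * c i) = 0 := by linear_combination h
        have hll2 : ρ * ρ - lam i * lam i = 0 :=
          (mul_eq_zero.1 hll).resolve_right hc2
        have hfac : (lam i - ρ) * (lam i + ρ) = 0 := by linear_combination -hll2
        have hlameq : lam i = ρ := by
          rcases mul_eq_zero.1 hfac with h' | h'
          · linarith
          · linarith [hlam0 i, hρ0]
        rw [hlameq]
    have hdeg : ∀ w : Fin n, (k:ℝ) * deg E w = ρ := by
      intro w
      rw [key w]
      calc ∑ i, (lam i * c i) * B i w = ∑ i, (ρ * c i) * B i w :=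
            Finset.sum_congr rfl fun i _ => by rw [heig i]
        _ = ρ * ∑ i, c i * B i w := by
            rw [Finset.mul_sum]
            exact Finset.sum_congr rfl fun i _ => by ring
        _ = ρ := by rw [fact1 w, mul_one]
    have hk0 : (0:ℝ) < k := by
      have : 0 < k := lt_of_lt_of_le (by norm_num) hk2
      exact_mod_cast this
    have hcast : (deg E u : ℝ) = deg E v := by
      have h1 := hdeg u
      have h2 := hdeg v
      have := h1.trans h2.symm
      exact mul_left_cancel₀ (ne_of_gt hk0) this
    exact_mod_cast hcast
  · -- regular implies equality
    intro hreg
    set d : ℕ := deg E ⟨0, hn⟩ with hddef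
    have hregd : ∀ u : Fin n, deg E u = d := fun u => hreg u ⟨0, hn⟩
    have hZval : Z = (n:ℝ) * (d:ℝ)^2 := by
      rw [hZ]
      simp [hregd, Finset.sum_const, mul_comm]
    have hsqrt : Real.sqrt (Z / n) = (d:ℝ) := by
      rw [hZval, mul_comm, mul_div_assoc, div_self (ne_of_gt hn0), mul_one]
      exact Real.sqrt_sq (by positivity)
    rw [hsqrt]
    -- upper bound: ρ ≤ k d via max-entry argument on an eigenvector for ρ
    obtain ⟨i₀, hi₀⟩ := hρ.1
    have hwex : ∃ u : Fin n, B i₀ u ≠ 0 := by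
      by_contra hcon
      push_neg at hcon
      have hcon' : ∀ u : Fin n, hQ.eigenvectorBasis i₀ u = 0 := hcon
      have := horth hQ i₀ i₀
      simp only [hcon'] at this
      simp at this
    obtain ⟨u₁, hu₁⟩ := hwex
    obtain ⟨u₀, -, hmax⟩ := Finset.exists_max_image univ (fun u => |B i₀ u|)
      ⟨u₁, mem_univ u₁⟩
    have habs : 0 < |B i₀ u₀| :=
      lt_of_lt_of_le (abs_pos.2 hu₁) (hmax u₁ (mem_univ u₁))
    have hup : ρ ≤ (k:ℝ) * d := by
      have heigen : ρ * B i₀ u₀ = ∑ v, Q u₀ v * B i₀ v := by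
        rw [hQb i₀ u₀, hi₀]
      have hb1 : |ρ * B i₀ u₀| ≤ ∑ v, Q u₀ v * |B i₀ v| := by
        rw [heigen]
        refine (Finset.abs_sum_le_sum_abs _ _).trans ?_
        refine Finset.sum_le_sum fun v _ => ?_
        rw [abs_mul, abs_of_nonneg (Q_nonneg E u₀ v)]
      have hb2 : ∑ v, Q u₀ v * |B i₀ v| ≤ ((k:ℝ) * d) * |B i₀ u₀| := by
        calc ∑ v, Q u₀ v * |B i₀ v| ≤ ∑ v, Q u₀ v * |B i₀ u₀| :=
              Finset.sum_le_sum fun v _ =>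
                mul_le_mul_of_nonneg_left (hmax v (mem_univ v)) (Q_nonneg E u₀ v)
          _ = ((k:ℝ) * d) * |B i₀ u₀| := by
              rw [← Finset.sum_mul, Q_rowsum E hk u₀, hregd u₀]
      have : ρ * |B i₀ u₀| ≤ ((k:ℝ) * d) * |B i₀ u₀| := by
        calc ρ * |B i₀ u₀| ≤ |ρ * B i₀ u₀| := by
              rw [abs_mul]
              exact mul_le_mul_of_nonneg_right (le_abs_self ρ) (abs_nonneg _)
          _ ≤ ((k:ℝ) * d) * |B i₀ u₀| := hb1.trans hb2
      exact le_of_mul_le_mul_right this habs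
    -- lower bound: k d is an eigenvalue
    have hlow : (k:ℝ) * d ≤ ρ := by
      have hkey2 : ∀ w : Fin n, ∑ i, (lam i * c i) * B i w = ∑ i, (((k:ℝ)*d) * c i) * B i w := by
        intro w
        rw [← key w, hregd w]
        calc (k:ℝ) * d = ((k:ℝ)*d) * ∑ i, c i * B i w := by rw [fact1 w, mul_one]
          _ = ∑ i, (((k:ℝ)*d) * c i) * B i w := by
              rw [Finset.mul_sum]
              exact Finset.sum_congr rfl fun i _ => by ring
      have hcoord : ∀ j, lam j * c j = ((k:ℝ)*d) * c j := by
        intro j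
        have h1 := coord hQ (fun i => lam i * c i) j
        have h2 := coord hQ (fun i => ((k:ℝ)*d) * c i) j
        simp only [hBdef] at hkey2
        rw [← h1, ← h2]
        exact Finset.sum_congr rfl fun u _ => by rw [hkey2 u]
      have hcex : ∃ j, c j ≠ 0 := by
        by_contra hcon
        push_neg at hcon
        have : (n:ℝ) = 0 := by
          rw [hn']
          exact Finset.sum_eq_zero fun i _ => by rw [hcon i, mul_zero]
        exact absurd this (ne_of_gt hn0)
      obtain ⟨j, hj⟩ := hcex
      have : lam j = (k:ℝ)*d := mul_right_cancel₀ hj (hcoord j)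
      exact this ▸ hρ.2 ⟨j, rfl⟩
    linarith
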